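/- Let $\mathcal{C} \subseteq (S^2)^n$ be a vector trifferent code and let $x, y$ be drawn uniformly and independently from $\mathcal{C}$. For any fixed subset $S \subseteq [n]$, the probability that $\langle x_s, y_s \rangle \neq 0$ for all $s \in S$ is at least $3^{-|S|}$. -/

import Mathlib

open scoped RealInnerProductSpace

def VectorTrifferent (n : ℕ) (C : Finset (Fin n → EuclideanSpace ℝ (Fin 3))) : Prop :=
  (∀ x ∈ C, ∀ i, ‖x i‖ = 1) ∧
  ∀ x ∈ C, ∀ y ∈ C, ∀ z ∈ C, x ≠ y → x ≠ z → y ≠ z →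
    ∃ i, ⟪x i, y i⟫ = 0 ∧ ⟪x i, z i⟫ = 0 ∧ ⟪y i, z i⟫ = 0

/-- For `x, y` drawn uniformly and independently from a vector trifferent code `C`, the
probability that `⟪x s, y s⟫ ≠ 0` for all `s ∈ S` is at least `3^{-|S|}`. -/
theorem prob_nonorth_ge (n : ℕ) (C : Finset (Fin n → EuclideanSpace ℝ (Fin 3)))
    (hC : VectorTrifferent n C) (hne : C.Nonempty) (S : Finset (Fin n)) :
    ((Nat.card {p : (Fin n → EuclideanSpace ℝ (Fin 3)) × (Fin n → EuclideanSpace ℝ (Fin 3)) //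
        p.1 ∈ C ∧ p.2 ∈ C ∧ ∀ s ∈ S, ⟪p.1 s, p.2 s⟫ ≠ 0} : ℝ) / (C.card : ℝ) ^ 2)
      ≥ (1 / 3 : ℝ) ^ S.card := by
  classical
  obtain ⟨hnorm, -⟩ := hC
  -- the tensor-power vectors
  let v : (Fin n → EuclideanSpace ℝ (Fin 3)) → ({s // s ∈ S} → Fin 3) → ℝ := fun x f => ∏ s, x s.1 (f s)
  have key : ∀ x y : Fin n → EuclideanSpace ℝ (Fin 3),
      (∑ f : {s // s ∈ S} → Fin 3, v x f * v y f) = ∏ s : {s // s ∈ S}, ⟪x s.1, y s.1⟫ := by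
    intro x y
    have h1 : ∀ s : {s // s ∈ S}, ⟪x s.1, y s.1⟫ = ∑ k : Fin 3, x s.1 k * y s.1 k := by
      intro s; simp [PiLp.inner_apply, RCLike.inner_apply]; exact Finset.sum_congr rfl fun k _ => mul_comm _ _
    rw [Finset.prod_congr rfl fun s _ => h1 s, Finset.prod_univ_sum]
    simp [v, Finset.prod_mul_distrib]
  have hunit : ∀ x ∈ C, (∑ f : {s // s ∈ S} → Fin 3, v x f * v x f) = 1 := by
    intro x hx
    rw [key]
    refine Finset.prod_eq_one fun s _ => ?_
    rw [real_inner_self_eq_norm_sq, hnorm x hx]; norm_num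
  set d : ℕ := Fintype.card ({s // s ∈ S} → Fin 3) with hd
  have hdval : d = 3 ^ S.card := by
    simp [hd, Fintype.card_fun]
  -- the set of "good" pairs
  set T : Finset ((Fin n → EuclideanSpace ℝ (Fin 3)) × (Fin n → EuclideanSpace ℝ (Fin 3))) :=
    (C ×ˢ C).filter (fun p => ∀ s ∈ S, ⟪p.1 s, p.2 s⟫ ≠ 0) with hT
  have hcard : (Nat.card {p : (Fin n → EuclideanSpace ℝ (Fin 3)) × (Fin n → EuclideanSpace ℝ (Fin 3)) //
      p.1 ∈ C ∧ p.2 ∈ C ∧ ∀ s ∈ S, ⟪p.1 s, p.2 s⟫ ≠ 0}) = T.card := by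
    have e : {p : (Fin n → EuclideanSpace ℝ (Fin 3)) × (Fin n → EuclideanSpace ℝ (Fin 3)) //
        p.1 ∈ C ∧ p.2 ∈ C ∧ ∀ s ∈ S, ⟪p.1 s, p.2 s⟫ ≠ 0} ≃ {p // p ∈ T} :=
      Equiv.subtypeEquivRight (by
        intro p
        simp [hT, Finset.mem_filter, Finset.mem_product, and_assoc])
    rw [Nat.card_congr e, Nat.card_eq_fintype_card, Fintype.card_coe]
  -- Gram matrix entries
  set M : ({s // s ∈ S} → Fin 3) → ({s // s ∈ S} → Fin 3) → ℝ :=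
    fun f g => ∑ x ∈ C, v x f * v x g with hM
  have htrace : (∑ f : {s // s ∈ S} → Fin 3, M f f) = (C.card : ℝ) := by
    rw [Finset.sum_comm]
    rw [Finset.sum_congr rfl fun x hx => hunit x hx]
    simp
  -- Cauchy-Schwarz on the diagonal
  have step1 : (C.card : ℝ) ^ 2 ≤ (d : ℝ) * ∑ f : {s // s ∈ S} → Fin 3, (M f f) ^ 2 := by
    rw [← htrace]
    simpa [hd] using sq_sum_le_card_mul_sum_sq (s := Finset.univ)
      (f := fun f : {s // s ∈ S} → Fin 3 => M f f)
  have step2 : (∑ f : {s // s ∈ S} → Fin 3, (M f f) ^ 2)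
      ≤ ∑ f : {s // s ∈ S} → Fin 3, ∑ g : {s // s ∈ S} → Fin 3, (M f g) ^ 2 := by
    refine Finset.sum_le_sum fun f _ => ?_
    exact Finset.single_le_sum (fun g _ => sq_nonneg (M f g)) (Finset.mem_univ f)
  -- expanding the Frobenius norm of the Gram matrix
  have expand : (∑ f : {s // s ∈ S} → Fin 3, ∑ g : {s // s ∈ S} → Fin 3, (M f g) ^ 2)
      = ∑ q ∈ C ×ˢ C, (∑ f : {s // s ∈ S} → Fin 3, v q.1 f * v q.2 f) ^ 2 := by
    rw [← Fintype.sum_prod_type']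
    calc (∑ p : ({s // s ∈ S} → Fin 3) × ({s // s ∈ S} → Fin 3), (M p.1 p.2) ^ 2)
        = ∑ p : ({s // s ∈ S} → Fin 3) × ({s // s ∈ S} → Fin 3),
            ∑ q ∈ C ×ˢ C, (v q.1 p.1 * v q.1 p.2) * (v q.2 p.1 * v q.2 p.2) := by
          refine Finset.sum_congr rfl fun p _ => ?_
          rw [hM, pow_two, Finset.sum_mul_sum, Finset.sum_product]
      _ = ∑ q ∈ C ×ˢ C, ∑ p : ({s // s ∈ S} → Fin 3) × ({s // s ∈ S} → Fin 3),
            (v q.1 p.1 * v q.1 p.2) * (v q.2 p.1 * v q.2 p.2) := Finset.sum_comm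
      _ = ∑ q ∈ C ×ˢ C, (∑ f : {s // s ∈ S} → Fin 3, v q.1 f * v q.2 f) ^ 2 := by
          refine Finset.sum_congr rfl fun q _ => ?_
          rw [pow_two, Finset.sum_mul_sum, ← Fintype.sum_prod_type']
          exact Finset.sum_congr rfl fun p _ => by ring
  -- bounding by the number of good pairs
  have step3 : (∑ q ∈ C ×ˢ C, (∑ f : {s // s ∈ S} → Fin 3, v q.1 f * v q.2 f) ^ 2)
      ≤ (T.card : ℝ) := by
    rw [← Finset.sum_filter_add_sum_filter_not (C ×ˢ C)
      (fun p => ∀ s ∈ S, ⟪p.1 s, p.2 s⟫ ≠ 0)]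
    have hbad : (∑ q ∈ (C ×ˢ C).filter (fun p => ¬ ∀ s ∈ S, ⟪p.1 s, p.2 s⟫ ≠ 0),
        (∑ f : {s // s ∈ S} → Fin 3, v q.1 f * v q.2 f) ^ 2) = 0 := by
      refine Finset.sum_eq_zero fun q hq => ?_
      rw [Finset.mem_filter] at hq
      obtain ⟨s₀, hs₀, hz⟩ := by push_neg at hq; exact hq.2
      rw [key]
      rw [Finset.prod_eq_zero (Finset.mem_univ (⟨s₀, hs₀⟩ : {s // s ∈ S})) hz]
      norm_num
    have hgood : (∑ q ∈ (C ×ˢ C).filter (fun p => ∀ s ∈ S, ⟪p.1 s, p.2 s⟫ ≠ 0),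
        (∑ f : {s // s ∈ S} → Fin 3, v q.1 f * v q.2 f) ^ 2) ≤ (T.card : ℝ) := by
      rw [hT]
      calc (∑ q ∈ (C ×ˢ C).filter (fun p => ∀ s ∈ S, ⟪p.1 s, p.2 s⟫ ≠ 0),
          (∑ f : {s // s ∈ S} → Fin 3, v q.1 f * v q.2 f) ^ 2)
          ≤ ∑ _q ∈ (C ×ˢ C).filter (fun p => ∀ s ∈ S, ⟪p.1 s, p.2 s⟫ ≠ 0), (1 : ℝ) := by
            refine Finset.sum_le_sum fun q hq => ?_
            rw [Finset.mem_filter, Finset.mem_product] at hq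
            calc (∑ f : {s // s ∈ S} → Fin 3, v q.1 f * v q.2 f) ^ 2
                ≤ (∑ f : {s // s ∈ S} → Fin 3, v q.1 f ^ 2)
                  * ∑ f : {s // s ∈ S} → Fin 3, v q.2 f ^ 2 :=
                  Finset.sum_mul_sq_le_sq_mul_sq _ _ _
              _ = 1 := by
                  have h1 := hunit q.1 hq.1.1
                  have h2 := hunit q.2 hq.1.2
                  simp only [← pow_two] at h1 h2
                  rw [h1, h2, mul_one]
        _ = (((C ×ˢ C).filter (fun p => ∀ s ∈ S, ⟪p.1 s, p.2 s⟫ ≠ 0)).card : ℝ) := by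
            simp
    rw [hbad, add_zero]
    exact hgood
  -- put everything together
  have hdpos : (0 : ℝ) < (d : ℝ) := by exact_mod_cast (Fintype.card_pos : 0 < d)
  have hmain : (C.card : ℝ) ^ 2 ≤ (d : ℝ) * (T.card : ℝ) :=
    step1.trans (by
      have h := (step2.trans expand.le).trans step3
      nlinarith)
  have hN : (0 : ℝ) < (C.card : ℝ) := by
    exact_mod_cast Finset.card_pos.mpr hne
  rw [hcard, ge_iff_le]
  have h13 : (1 / 3 : ℝ) ^ S.card = 1 / (d : ℝ) := by
    rw [hdval]; push_cast; rw [div_pow, one_pow]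
  rw [h13, div_le_div_iff₀ hdpos (by positivity)]
  linarith [hmain]
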